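/- Let Δ : ℤ → ℤ be 3-periodic with Δᵢ ≥ 1 for all i, and let r : ℤ → ℤ satisfy the rank recursion. Suppose r₁ ≥ 1, Δ₁·r₁ − r₀ > 0, Δ₂·r₁ − r₂ > 0, and there exists a real number l > 1 such that (Δᵢ : ℝ) − Δⱼ/l > l for all distinct i, j ∈ {1,2,3}, and (r₀ : ℝ) > l·r₁ and (r₂ : ℝ) > l·r₁. Then for every i ∈ ℤ, rᵢ ≥ 1 and r'ᵢ := Δ_{i−1}·r_{i−1} − r_{i−2} > 0. -/

import Mathlib

/-- Growth criterion for generation of an elliptic helix: if `Δ : ℤ → ℤ` is 3-periodic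
with `Δᵢ ≥ 1`, `r` satisfies the rank recursion, `r₁ ≥ 1`, `Δ₁r₁ − r₀ > 0`,
`Δ₂r₁ − r₂ > 0`, and there is a real `l > 1` with `Δᵢ − Δⱼ/l > l` for all distinct
`i, j ∈ {1,2,3}` and `r₀ > l·r₁`, `r₂ > l·r₁`, then all ranks `rᵢ ≥ 1` and all
mutation ranks `r'ᵢ = Δ_{i−1}·r_{i−1} − r_{i−2}` are positive. -/
theorem growth_criterion (Δ r : ℤ → ℤ)
    (hΔper : ∀ i : ℤ, Δ (i + 3) = Δ i) (hΔpos : ∀ i : ℤ, 1 ≤ Δ i)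
    (hrec : ∀ i : ℤ, r (i + 3) = r i - Δ (i + 1) * r (i + 1) + Δ i * r (i + 2))
    (hr1 : 1 ≤ r 1)
    (h1 : 0 < Δ 1 * r 1 - r 0) (h2 : 0 < Δ 2 * r 1 - r 2)
    (l : ℝ) (hl : 1 < l)
    (hgrow : ∀ i j : ℤ, i ∈ ({1, 2, 3} : Set ℤ) → j ∈ ({1, 2, 3} : Set ℤ) → i ≠ j →
      l < (Δ i : ℝ) - (Δ j : ℝ) / l)
    (hr0 : l * (r 1 : ℝ) < (r 0 : ℝ)) (hr2 : l * (r 1 : ℝ) < (r 2 : ℝ)) :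
    ∀ i : ℤ, 1 ≤ r i ∧ 0 < Δ (i - 1) * r (i - 1) - r (i - 2) := by
  have hl0 : (0:ℝ) < l := by linarith
  -- full periodicity
  have per3 : ∀ k i : ℤ, Δ (i + 3 * k) = Δ i := by
    intro k
    induction k using Int.induction_on with
    | zero => intro i; norm_num
    | succ k ih =>
        intro i
        rw [show i + 3 * ((k:ℤ) + 1) = i + 3 * k + 3 by ring, hΔper (i + 3 * k)]
        exact ih i
    | pred k ih =>
        intro i
        have h := hΔper (i + 3 * (-(k:ℤ) - 1))
        rw [show i + 3 * (-(k:ℤ) - 1) + 3 = i + 3 * (-(k:ℤ)) by ring] at h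
        rw [← h]
        exact ih i
  have hmod : ∀ i j : ℤ, i % 3 = j % 3 → Δ i = Δ j := by
    intro i j h
    have hi : Δ i = Δ (i % 3) := by
      have h' := per3 (i / 3) (i % 3)
      rw [show i % 3 + 3 * (i / 3) = i from by omega] at h'
      exact h'
    have hj : Δ j = Δ (j % 3) := by
      have h' := per3 (j / 3) (j % 3)
      rw [show j % 3 + 3 * (j / 3) = j from by omega] at h'
      exact h'
    rw [hi, hj, h]
  have hrep : ∀ i : ℤ, ∃ i', i' ∈ ({1,2,3} : Set ℤ) ∧ Δ i = Δ i' ∧ i' % 3 = i % 3 := by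
    intro i
    have h3 : i % 3 = 0 ∨ i % 3 = 1 ∨ i % 3 = 2 := by omega
    rcases h3 with h | h | h
    · exact ⟨3, by simp, hmod i 3 (by omega), by omega⟩
    · exact ⟨1, by simp, hmod i 1 (by omega), by omega⟩
    · exact ⟨2, by simp, hmod i 2 (by omega), by omega⟩
  have hgrow' : ∀ i j : ℤ, i % 3 ≠ j % 3 → l < (Δ i : ℝ) - (Δ j : ℝ) / l := by
    intro i j h
    obtain ⟨i', hi1, hi2, hi3⟩ := hrep i
    obtain ⟨j', hj1, hj2, hj3⟩ := hrep j
    rw [hi2, hj2]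
    exact hgrow i' j' hi1 hj1 (by intro e; rw [e] at hi3; omega)
  have hkey : ∀ i j : ℤ, i % 3 ≠ j % 3 →
      l * l + (Δ j : ℝ) < l * (Δ i : ℝ) ∧ l < (Δ i : ℝ) := by
    intro i j h
    have hg := hgrow' i j h
    have hj1 : (1:ℝ) ≤ (Δ j : ℝ) := by exact_mod_cast hΔpos j
    have hdiv : (0:ℝ) < (Δ j : ℝ) / l := div_pos (by linarith) hl0
    constructor
    · have h' := mul_lt_mul_of_pos_left hg hl0
      have hx : l * ((Δ j : ℝ) / l) = (Δ j : ℝ) := by field_simp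
      rw [mul_sub, hx] at h'
      linarith
    · linarith
  -- forward key step
  have keyF : ∀ i : ℤ, 0 < r i → 0 < r (i+1) → l * (r (i+1) : ℝ) < (r (i+2) : ℝ) →
      l * (r (i+2) : ℝ) < (r (i+3) : ℝ) := by
    intro i ha hb hc
    obtain ⟨hk, hD⟩ := hkey i (i+1) (by omega)
    have haR : (0:ℝ) < (r i : ℝ) := by exact_mod_cast ha
    have hbR : (0:ℝ) < (r (i+1) : ℝ) := by exact_mod_cast hb
    have hR : (r (i+3) : ℝ) = (r i : ℝ) - (Δ (i+1) : ℝ) * (r (i+1) : ℝ)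
        + (Δ i : ℝ) * (r (i+2) : ℝ) := by exact_mod_cast hrec i
    rw [hR]
    nlinarith [mul_pos (sub_pos.2 hD) (sub_pos.2 hc), mul_pos hbR (sub_pos.2 hk)]
  -- backward key step
  have keyB : ∀ i : ℤ, 0 < r (i+2) → 0 < r (i+1) → l * (r (i+1) : ℝ) < (r i : ℝ) →
      l * (r i : ℝ) < (r (i-1) : ℝ) := by
    intro i ha hb hc
    obtain ⟨hk, hD⟩ := hkey i (i-1) (by omega)
    have haR : (0:ℝ) < (r (i+2) : ℝ) := by exact_mod_cast ha
    have hbR : (0:ℝ) < (r (i+1) : ℝ) := by exact_mod_cast hb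
    have h := hrec (i-1)
    rw [show i - 1 + 3 = i + 2 by ring, show i - 1 + 1 = i by ring,
       show i - 1 + 2 = i + 1 by ring] at h
    have hR : (r (i+2) : ℝ) = (r (i-1) : ℝ) - (Δ i : ℝ) * (r i : ℝ)
        + (Δ (i-1) : ℝ) * (r (i+1) : ℝ) := by exact_mod_cast h
    nlinarith [mul_pos (sub_pos.2 hD) (sub_pos.2 hc), mul_pos hbR (sub_pos.2 hk), haR]
  have r1R : (1:ℝ) ≤ (r 1 : ℝ) := by exact_mod_cast hr1
  have pos0 : 0 < r 0 := by
    have : (0:ℝ) < (r 0 : ℝ) := by nlinarith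
    exact_mod_cast this
  have pos2 : 0 < r 2 := by
    have : (0:ℝ) < (r 2 : ℝ) := by nlinarith
    exact_mod_cast this
  have pos1 : 0 < r 1 := by omega
  have F : ∀ n : ℕ, 0 < r n ∧ 0 < r ((n:ℤ)+1) ∧ l * (r ((n:ℤ)+1) : ℝ) < (r ((n:ℤ)+2) : ℝ) := by
    intro n
    induction n with
    | zero =>
        norm_num
        exact ⟨pos0, pos1, hr2⟩
    | succ n ih =>
        obtain ⟨ha, hb, hc⟩ := ih
        have hb2 : 0 < r ((n:ℤ)+2) := by
          have : (0:ℝ) < (r ((n:ℤ)+2) : ℝ) :=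
            lt_trans (mul_pos hl0 (by exact_mod_cast hb)) hc
          exact_mod_cast this
        have hk := keyF n ha hb hc
        refine ⟨?_, ?_, ?_⟩
        · rw [show ((n+1:ℕ):ℤ) = (n:ℤ) + 1 by push_cast; ring]
          exact hb
        · rw [show ((n+1:ℕ):ℤ) + 1 = (n:ℤ) + 2 by push_cast; ring]
          exact hb2
        · rw [show ((n+1:ℕ):ℤ) + 1 = (n:ℤ) + 2 by push_cast; ring,
             show ((n+1:ℕ):ℤ) + 2 = (n:ℤ) + 3 by push_cast; ring]
          exact hk
  have G : ∀ n : ℕ, 0 < r (2 - (n:ℤ)) ∧ 0 < r (1 - (n:ℤ)) ∧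
      l * (r (1 - (n:ℤ)) : ℝ) < (r (-(n:ℤ)) : ℝ) := by
    intro n
    induction n with
    | zero =>
        norm_num
        exact ⟨pos2, pos1, hr0⟩
    | succ n ih =>
        obtain ⟨ha, hb, hc⟩ := ih
        have hb2 : 0 < r (-(n:ℤ)) := by
          have : (0:ℝ) < (r (-(n:ℤ)) : ℝ) :=
            lt_trans (mul_pos hl0 (by exact_mod_cast hb)) hc
          exact_mod_cast this
        have ha' : 0 < r (-(n:ℤ) + 2) := by
          rw [show -(n:ℤ) + 2 = 2 - (n:ℤ) by ring]; exact ha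
        have hb' : 0 < r (-(n:ℤ) + 1) := by
          rw [show -(n:ℤ) + 1 = 1 - (n:ℤ) by ring]; exact hb
        have hc' : l * (r (-(n:ℤ) + 1) : ℝ) < (r (-(n:ℤ)) : ℝ) := by
          rw [show -(n:ℤ) + 1 = 1 - (n:ℤ) by ring]; exact hc
        have hk := keyB (-(n:ℤ)) ha' hb' hc'
        refine ⟨?_, ?_, ?_⟩
        · rw [show 2 - ((n+1:ℕ):ℤ) = 1 - (n:ℤ) by push_cast; ring]
          exact hb
        · rw [show 1 - ((n+1:ℕ):ℤ) = -(n:ℤ) by push_cast; ring]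
          exact hb2
        · rw [show 1 - ((n+1:ℕ):ℤ) = -(n:ℤ) by push_cast; ring,
             show -((n+1:ℕ):ℤ) = -(n:ℤ) - 1 by push_cast; ring]
          exact hk
  have pos : ∀ i : ℤ, 0 < r i := by
    intro i
    rcases le_or_gt 0 i with h | h
    · have := (F i.toNat).1
      rwa [show ((i.toNat : ℕ) : ℤ) = i by omega] at this
    · have := (G (2 - i).toNat).1
      rwa [show 2 - (((2 - i).toNat : ℕ) : ℤ) = i by omega] at this
  have Fgrow : ∀ k : ℤ, 2 ≤ k → l * (r (k-1) : ℝ) < (r k : ℝ) := by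
    intro k hk2
    have := (F (k-2).toNat).2.2
    rwa [show (((k-2).toNat : ℕ) : ℤ) + 1 = k - 1 by omega,
        show (((k-2).toNat : ℕ) : ℤ) + 2 = k by omega] at this
  have Bgrow : ∀ k : ℤ, k ≤ 0 → l * (r (k+1) : ℝ) < (r k : ℝ) := by
    intro k hk
    have := (G (-k).toNat).2.2
    rwa [show 1 - (((-k).toNat : ℕ) : ℤ) = k + 1 by omega,
        show -(((-k).toNat : ℕ) : ℤ) = k by omega] at this
  have intlt : ∀ a b : ℤ, 0 < a → l * (a : ℝ) < (b : ℝ) → a < b := by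
    intro a b ha hab
    have haR : (1:ℝ) ≤ (a:ℝ) := by exact_mod_cast ha
    have : (a:ℝ) < (b:ℝ) := by nlinarith
    exact_mod_cast this
  intro i
  refine ⟨pos i, ?_⟩
  rcases lt_trichotomy i 1 with hi | hi | hi
  · -- i ≤ 0
    have hi' : i ≤ 0 := by omega
    have h := hrec (i-2)
    rw [show i - 2 + 3 = i + 1 by ring, show i - 2 + 1 = i - 1 by ring,
       show i - 2 + 2 = i by ring] at h
    have hlt : r (i+1) < r i := intlt _ _ (pos (i+1)) (Bgrow i hi')
    have hmul : r i ≤ Δ (i-2) * r i := le_mul_of_one_le_left (le_of_lt (pos i)) (hΔpos _)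
    linarith
  · -- i = 1
    subst hi
    have h := hrec (-1)
    norm_num at h
    have hΔm : Δ (-1) = Δ 2 := hmod (-1) 2 (by omega)
    rw [hΔm] at h
    show (0:ℤ) < Δ (1-1) * r (1-1) - r (1-2)
    norm_num
    linarith
  · rcases eq_or_lt_of_le (by omega : (2:ℤ) ≤ i) with h2' | h3
    · -- i = 2
      subst h2'
      norm_num
      linarith
    · -- i ≥ 3
      have hg := Fgrow (i-1) (by omega)
      rw [show i - 1 - 1 = i - 2 by ring] at hg
      have hlt : r (i-2) < r (i-1) := intlt _ _ (pos (i-2)) hg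
      have hmul : r (i-1) ≤ Δ (i-1) * r (i-1) :=
        le_mul_of_one_le_left (le_of_lt (pos (i-1))) (hΔpos _)
      linarith
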